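/- Let K be a positive integer, d ≥ 1, L = dK, with blocks: for j ∈ [L], π(j) = ⌈j/d⌉. Let x be uniform on Z_3^K and, conditionally on x, for each j independently let (y_j, z_j) be uniform on the six pairs (a,a+1),(a,a+2),(a+1,a),(a+1,a+1),(a+2,a),(a+2,a+2) where a = x_{π(j)}. Then for any f₁ : Z_3^K → ℝ and g₁, g₂ : Z_3^L → ℝ, E[f₁(x)g₁(y)g₂(z)] = Σ_{α ∈ Z_3^L} f̂₁(π₃(α))·ĝ₁(α)·ĝ₂(α)·(−1/2)^{#α}, where π₃(α) ∈ Z_3^K has i-th coordinate Σ_{j: π(j)=i} α_j mod 3, and #α is the number of nonzero coordinates of α. -/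

import Mathlib

open Finset

noncomputable def ω : ℂ := Complex.exp (2 * Real.pi * Complex.I / 3)

lemma omega_prim : IsPrimitiveRoot ω 3 := by
  have := Complex.isPrimitiveRoot_exp 3 (by norm_num)
  convert this using 2
  simp [ω]

lemma omega_pow_three : ω ^ 3 = 1 := omega_prim.pow_eq_one

lemma omega_sum : 1 + ω + ω ^ 2 = 0 := by
  have := omega_prim.geom_sum_eq_zero (by norm_num)
  simpa [Finset.sum_range_succ] using this

lemma omega_abs : ‖ω‖ = 1 := by
  have : ω = Complex.exp ((2*Real.pi/3 : ℝ) * Complex.I) := by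
    unfold ω; push_cast; ring_nf
  rw [this, Complex.norm_exp_ofReal_mul_I]

lemma conj_omega : (starRingEnd ℂ) ω = ω ^ 2 := by
  have h1 : ω⁻¹ = (starRingEnd ℂ) ω := Complex.inv_eq_conj omega_abs
  have h2 : ω * ω ^ 2 = 1 := by rw [← pow_succ']; exact omega_pow_three
  rw [← h1]
  exact (inv_eq_of_mul_eq_one_right h2).symm ▸ rfl

noncomputable def e (a : ZMod 3) : ℂ := ω ^ a.val

lemma omega_pow_mod (n : ℕ) : ω ^ n = ω ^ (n % 3) := by
  conv_lhs => rw [← Nat.div_add_mod n 3]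
  rw [pow_add, pow_mul, omega_pow_three, one_pow, one_mul]

lemma e_add (a b : ZMod 3) : e (a + b) = e a * e b := by
  unfold e
  rw [← pow_add, ZMod.val_add, ← omega_pow_mod]

lemma e_zero : e 0 = 1 := by unfold e; norm_num

lemma e_sum {ι : Type*} (s : Finset ι) (f : ι → ZMod 3) :
    e (∑ i ∈ s, f i) = ∏ i ∈ s, e (f i) := by
  classical
  induction s using Finset.cons_induction with
  | empty => simp [e_zero]
  | cons i s hi ih => rw [Finset.sum_cons, Finset.prod_cons, e_add, ih]

lemma conj_e (a : ZMod 3) : (starRingEnd ℂ) (e a) = e (-a) := by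
  unfold e
  rw [map_pow, conj_omega, ← pow_mul, omega_pow_mod, omega_pow_mod ((-a).val)]
  congr 1
  fin_cases a <;> rfl

lemma zmod3_sum (f : ZMod 3 → ℂ) : ∑ a : ZMod 3, f a = f 0 + f 1 + f 2 :=
  Fin.sum_univ_three f

noncomputable def cc (a : ZMod 3) : ℂ := if a = 0 then 1 else -1/2

lemma e_one : e 1 = ω := by
  unfold e; rw [show ZMod.val (1 : ZMod 3) = 1 from rfl, pow_one]

lemma e_two : e 2 = ω ^ 2 := by
  unfold e; rw [show ZMod.val (2 : ZMod 3) = 2 from rfl]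

lemma cc_zero : cc 0 = 1 := by unfold cc; rw [if_pos rfl]
lemma cc_one : cc 1 = -1/2 := by unfold cc; rw [if_neg (by decide)]
lemma cc_two : cc 2 = -1/2 := by unfold cc; rw [if_neg (by decide)]

lemma coord (u v w : ZMod 3) :
    ∑ a : ZMod 3, e (-(a * u)) * e (-(a * v)) * e (-(a * w)) * cc a
      = if v + w = 2 * u then 0 else 3 / 2 := by
  have key : ∀ a : ZMod 3, e (-(a*u)) * e (-(a*v)) * e (-(a*w)) = e (-(a*(u+v+w))) := by
    intro a
    rw [← e_add, ← e_add]; congr 1; ring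
  simp only [key]
  have hcond : ∀ u v w : ZMod 3, (v + w = 2 * u) ↔ (u + v + w = 0) := by decide
  rw [show (if v + w = 2*u then (0:ℂ) else 3/2) = (if u+v+w = 0 then (0:ℂ) else 3/2) by
    simp [hcond u v w]]
  generalize (u + v + w) = t
  have htri : ∀ t : ZMod 3, t = 0 ∨ t = 1 ∨ t = 2 := by decide
  rw [zmod3_sum]
  rcases htri t with h|h|h <;> subst h
  · rw [if_pos rfl,
      show (-(0*(0:ZMod 3))) = 0 from by decide,
      show (-(1*(0:ZMod 3))) = 0 from by decide,
      show (-(2*(0:ZMod 3))) = 0 from by decide,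
      e_zero, cc_zero, cc_one, cc_two]
    ring
  · rw [if_neg (by decide),
      show (-(0*(1:ZMod 3))) = 0 from by decide,
      show (-(1*(1:ZMod 3))) = 2 from by decide,
      show (-(2*(1:ZMod 3))) = 1 from by decide,
      e_zero, e_one, e_two, cc_zero, cc_one, cc_two]
    linear_combination (-(1:ℂ)/2) * omega_sum
  · rw [if_neg (by decide),
      show (-(0*(2:ZMod 3))) = 0 from by decide,
      show (-(1*(2:ZMod 3))) = 1 from by decide,
      show (-(2*(2:ZMod 3))) = 2 from by decide,
      e_zero, e_one, e_two, cc_zero, cc_one, cc_two]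
    linear_combination (-(1:ℂ)/2) * omega_sum

/-- Fourier coefficient of `f : Z_3^ι → ℂ` at `α`: `E_x[f(x) · conj(ω^{α·x})]`. -/
noncomputable def fhat {ι : Type*} [Fintype ι] [DecidableEq ι] (f : (ι → ZMod 3) → ℂ)
    (α : ι → ZMod 3) : ℂ :=
  (∑ x : ι → ZMod 3, f x * (starRingEnd ℂ) (ω ^ (∑ i, α i * x i).val)) /
    (Fintype.card (ι → ZMod 3) : ℂ)

/-- The projection `π₃(α) ∈ Z_3^K`, whose `i`-th coordinate is the sum of block `i` of `α`. -/
def pi3 {K d : ℕ} (α : Fin K × Fin d → ZMod 3) : Fin K → ZMod 3 :=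
  fun i => ∑ j, α (i, j)

/-- `#α`: number of nonzero coordinates of `α`. -/
def nsupp {ι : Type*} [Fintype ι] (α : ι → ZMod 3) : ℕ :=
  (univ.filter (fun i => α i ≠ 0)).card

/-- The test distribution's joint pmf: `x` uniform on `Z_3^K`, and independently per coordinate
`(i,j)`, `(y_{ij}, z_{ij})` uniform over the six pairs with `y_{ij} + z_{ij} ≠ 2·x_i`,
i.e. the pairs `(a,a+1),(a,a+2),(a+1,a),(a+1,a+1),(a+2,a),(a+2,a+2)` for `a = x_i`. -/
noncomputable def wt {K d : ℕ} (x : Fin K → ZMod 3) (y z : Fin K × Fin d → ZMod 3) : ℝ :=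
  (1 / 3 ^ K) * ∏ p : Fin K × Fin d, (if y p + z p = 2 * x p.1 then (0 : ℝ) else 1/6)

lemma nsupp_prod {ι : Type*} [Fintype ι] [DecidableEq ι] (α : ι → ZMod 3) :
    (-(1:ℂ)/2) ^ nsupp α = ∏ i, cc (α i) := by
  unfold nsupp cc
  rw [Finset.prod_ite, Finset.prod_const, Finset.prod_const, one_pow, one_mul]

lemma kernel (K d : ℕ) (x : Fin K → ZMod 3) (y z : Fin K × Fin d → ZMod 3) :
    ∑ α : Fin K × Fin d → ZMod 3,
      (starRingEnd ℂ) (ω ^ (∑ i, pi3 α i * x i).val)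
        * (starRingEnd ℂ) (ω ^ (∑ p, α p * y p).val)
        * (starRingEnd ℂ) (ω ^ (∑ p, α p * z p).val)
        * (-(1:ℂ)/2) ^ nsupp α
      = (3:ℂ) ^ K * 3 ^ (K*d) * 3 ^ (K*d) * (wt x y z : ℝ) := by
  have step1 : ∀ α : Fin K × Fin d → ZMod 3,
      (starRingEnd ℂ) (ω ^ (∑ i, pi3 α i * x i).val)
        * (starRingEnd ℂ) (ω ^ (∑ p, α p * y p).val)
        * (starRingEnd ℂ) (ω ^ (∑ p, α p * z p).val)
        * (-(1:ℂ)/2) ^ nsupp α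
      = ∏ p : Fin K × Fin d,
          (e (-(α p * x p.1)) * e (-(α p * y p)) * e (-(α p * z p)) * cc (α p)) := by
    intro α
    have hx : (∑ i, pi3 α i * x i) = ∑ p : Fin K × Fin d, α p * x p.1 := by
      rw [Fintype.sum_prod_type]
      exact Finset.sum_congr rfl (fun i _ => by rw [pi3, Finset.sum_mul])
    have conv : ∀ (s : ZMod 3), (starRingEnd ℂ) (ω ^ s.val) = e (-s) := fun s => conj_e s
    rw [hx, conv, conv, conv, nsupp_prod,
      show (-(∑ p : Fin K × Fin d, α p * x p.1)) = ∑ p : Fin K × Fin d, -(α p * x p.1) by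
        rw [Finset.sum_neg_distrib],
      show (-(∑ p : Fin K × Fin d, α p * y p)) = ∑ p : Fin K × Fin d, -(α p * y p) by
        rw [Finset.sum_neg_distrib],
      show (-(∑ p : Fin K × Fin d, α p * z p)) = ∑ p : Fin K × Fin d, -(α p * z p) by
        rw [Finset.sum_neg_distrib],
      e_sum, e_sum, e_sum, ← Finset.prod_mul_distrib, ← Finset.prod_mul_distrib,
      ← Finset.prod_mul_distrib]
  simp only [step1]
  rw [← Fintype.piFinset_univ, ← Finset.prod_univ_sum (fun _ => (univ : Finset (ZMod 3)))
    (fun p a => e (-(a * x p.1)) * e (-(a * y p)) * e (-(a * z p)) * cc a)]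
  have : ∀ p : Fin K × Fin d,
      (∑ a : ZMod 3, e (-(a * x p.1)) * e (-(a * y p)) * e (-(a * z p)) * cc a)
        = if y p + z p = 2 * x p.1 then (0:ℂ) else 3/2 := fun p => coord _ _ _
  simp only [this]
  have hsplit : ∀ p : Fin K × Fin d,
      (if y p + z p = 2 * x p.1 then (0:ℂ) else 3/2)
        = 9 * (if y p + z p = 2 * x p.1 then (0:ℂ) else 1/6) := by
    intro p; split <;> norm_num
  simp only [hsplit]
  rw [Finset.prod_mul_distrib, Finset.prod_const]
  have hwt : ((wt x y z : ℝ) : ℂ)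
      = (1/3^K) * ∏ p : Fin K × Fin d, (if y p + z p = 2*x p.1 then (0:ℂ) else 1/6) := by
    unfold wt
    push_cast [apply_ite (Complex.ofReal)]
    norm_num
  rw [hwt, Finset.card_univ, Fintype.card_prod, Fintype.card_fin, Fintype.card_fin]
  have h9 : (9:ℂ)^(K*d) = 3^(K*d)*3^(K*d) := by rw [← mul_pow]; norm_num
  have h3 : (3:ℂ)^K ≠ 0 := pow_ne_zero _ (by norm_num)
  rw [h9]
  field_simp

lemma sum_expand {ι₁ ι₂ ι₃ : Type*} [Fintype ι₁] [Fintype ι₂] [Fintype ι₃]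
    (A : ι₁ → ℂ) (B : ι₂ → ℂ) (C : ι₃ → ℂ) (w N₁ N₂ N₃ : ℂ) :
    ((∑ x, A x) / N₁) * ((∑ y, B y) / N₂) * ((∑ z, C z) / N₃) * w
      = ∑ x, ∑ y, ∑ z, A x * B y * C z * w / (N₁ * N₂ * N₃) := by
  rw [Finset.sum_div, Finset.sum_mul, Finset.sum_mul, Finset.sum_mul]
  refine Finset.sum_congr rfl (fun x _ => ?_)
  rw [Finset.sum_div, Finset.mul_sum, Finset.sum_mul, Finset.sum_mul]
  refine Finset.sum_congr rfl (fun y _ => ?_)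
  rw [Finset.sum_div, Finset.mul_sum, Finset.sum_mul]
  refine Finset.sum_congr rfl (fun z _ => ?_)
  ring

/-- Three-function Fourier expansion: for real-valued `f₁, g₁, g₂`,
`E[f₁(x)g₁(y)g₂(z)] = Σ_α f̂₁(π₃(α))·ĝ₁(α)·ĝ₂(α)·(−1/2)^{#α}`. -/
theorem stmt8 (K d : ℕ) (hK : 0 < K) (hd : 1 ≤ d)
    (f₁ : (Fin K → ZMod 3) → ℝ) (g₁ g₂ : (Fin K × Fin d → ZMod 3) → ℝ) :
    ∑ x : Fin K → ZMod 3, ∑ y : Fin K × Fin d → ZMod 3, ∑ z : Fin K × Fin d → ZMod 3,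
        (wt x y z : ℂ) * (f₁ x : ℂ) * (g₁ y : ℂ) * (g₂ z : ℂ)
      = ∑ α : Fin K × Fin d → ZMod 3,
          fhat (fun x => (f₁ x : ℂ)) (pi3 α) * fhat (fun y => (g₁ y : ℂ)) α
            * fhat (fun z => (g₂ z : ℂ)) α * (-(1 : ℂ)/2) ^ nsupp α := by
  have hc1 : (Fintype.card (Fin K → ZMod 3) : ℂ) = 3 ^ K := by
    rw [Fintype.card_fun]; push_cast; norm_num
  have hc2 : (Fintype.card (Fin K × Fin d → ZMod 3) : ℂ) = 3 ^ (K * d) := by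
    rw [Fintype.card_fun]; push_cast
    rw [Fintype.card_prod, Fintype.card_fin, Fintype.card_fin]
    norm_num
  symm
  calc
    ∑ α : Fin K × Fin d → ZMod 3,
        fhat (fun x => (f₁ x : ℂ)) (pi3 α) * fhat (fun y => (g₁ y : ℂ)) α
          * fhat (fun z => (g₂ z : ℂ)) α * (-(1 : ℂ)/2) ^ nsupp α
      = ∑ α : Fin K × Fin d → ZMod 3, ∑ x : Fin K → ZMod 3,
          ∑ y : Fin K × Fin d → ZMod 3, ∑ z : Fin K × Fin d → ZMod 3,
            ((f₁ x : ℂ) * (starRingEnd ℂ) (ω ^ (∑ i, pi3 α i * x i).val))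
              * ((g₁ y : ℂ) * (starRingEnd ℂ) (ω ^ (∑ p, α p * y p).val))
              * ((g₂ z : ℂ) * (starRingEnd ℂ) (ω ^ (∑ p, α p * z p).val))
              * (-(1 : ℂ)/2) ^ nsupp α
              / (3 ^ K * 3 ^ (K * d) * 3 ^ (K * d)) := by
        refine Finset.sum_congr rfl (fun α _ => ?_)
        rw [fhat, fhat, fhat, hc1, hc2, sum_expand]
    _ = ∑ x : Fin K → ZMod 3, ∑ y : Fin K × Fin d → ZMod 3, ∑ z : Fin K × Fin d → ZMod 3,
          ∑ α : Fin K × Fin d → ZMod 3,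
            ((f₁ x : ℂ) * (starRingEnd ℂ) (ω ^ (∑ i, pi3 α i * x i).val))
              * ((g₁ y : ℂ) * (starRingEnd ℂ) (ω ^ (∑ p, α p * y p).val))
              * ((g₂ z : ℂ) * (starRingEnd ℂ) (ω ^ (∑ p, α p * z p).val))
              * (-(1 : ℂ)/2) ^ nsupp α
              / (3 ^ K * 3 ^ (K * d) * 3 ^ (K * d)) := by
        rw [Finset.sum_comm]
        refine Finset.sum_congr rfl (fun x _ => ?_)
        rw [Finset.sum_comm]
        refine Finset.sum_congr rfl (fun y _ => ?_)
        rw [Finset.sum_comm]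
    _ = ∑ x : Fin K → ZMod 3, ∑ y : Fin K × Fin d → ZMod 3, ∑ z : Fin K × Fin d → ZMod 3,
          (wt x y z : ℂ) * (f₁ x : ℂ) * (g₁ y : ℂ) * (g₂ z : ℂ) := by
        refine Finset.sum_congr rfl (fun x _ => ?_)
        refine Finset.sum_congr rfl (fun y _ => ?_)
        refine Finset.sum_congr rfl (fun z _ => ?_)
        have hre : ∀ α : Fin K × Fin d → ZMod 3,
            ((f₁ x : ℂ) * (starRingEnd ℂ) (ω ^ (∑ i, pi3 α i * x i).val))
              * ((g₁ y : ℂ) * (starRingEnd ℂ) (ω ^ (∑ p, α p * y p).val))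
              * ((g₂ z : ℂ) * (starRingEnd ℂ) (ω ^ (∑ p, α p * z p).val))
              * (-(1 : ℂ)/2) ^ nsupp α
              / (3 ^ K * 3 ^ (K * d) * 3 ^ (K * d))
            = (f₁ x : ℂ) * (g₁ y : ℂ) * (g₂ z : ℂ)
              * ((starRingEnd ℂ) (ω ^ (∑ i, pi3 α i * x i).val)
                * (starRingEnd ℂ) (ω ^ (∑ p, α p * y p).val)
                * (starRingEnd ℂ) (ω ^ (∑ p, α p * z p).val)
                * (-(1 : ℂ)/2) ^ nsupp α)
              / (3 ^ K * 3 ^ (K * d) * 3 ^ (K * d)) := by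
          intro α; ring
        simp only [hre]
        rw [← Finset.sum_div, ← Finset.mul_sum, kernel]
        have hN : (3:ℂ) ^ K * 3 ^ (K * d) * 3 ^ (K * d) ≠ 0 := by
          apply mul_ne_zero; apply mul_ne_zero
          all_goals exact pow_ne_zero _ (by norm_num)
        field_simp
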